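/- Let G be a graph and let U be an inclusion-maximal subset of V(G) such that G[U] is connected and G − N_G[U] contains an induced path on k vertices (k ≥ 1 fixed). Let (P̃, x, y) be an induced k-vertex path in G' = G − N_G[U] with endpoints x, y, and let (P̃', x', y') be an extension of it in G. Then it is impossible that exactly one of x', y' lies in N_G(U): if x' ∈ N_G(U) and y' ∈ V(G'), then U ∪ {x'} would induce a connected subgraph whose deleted closed neighborhood still contains an induced k-vertex path, contradicting maximality of U. -/

import Mathlib

open SimpleGraph

/-- Closed neighborhood of a vertex set. -/
def closedNbhd {V : Type*} (G : SimpleGraph V) (S : Set V) : Set V :=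
  S ∪ {v | ∃ u ∈ S, G.Adj u v}

/-- Open neighborhood of a vertex set. -/
def openNbhd {V : Type*} (G : SimpleGraph V) (S : Set V) : Set V :=
  {v | v ∉ S ∧ ∃ u ∈ S, G.Adj u v}

/-- A walk that is an induced path. -/
def IsInducedPathW {V : Type*} (G : SimpleGraph V) {a b : V} (p : G.Walk a b) : Prop :=
  p.IsPath ∧ ∀ u ∈ p.support, ∀ v ∈ p.support, G.Adj u v → s(u, v) ∈ p.edges

/-- The extension with pendant vertices `s'`, `t'` attached to a copy with vertex set `S`
is closable: there is an induced `s',t'`-path meeting `N[S ∪ {s',t'}]` only in `s'` and `t'`. -/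
def Closable {V : Type*} (G : SimpleGraph V) (S : Set V) (s' t' : V) : Prop :=
  ∃ p : G.Walk s' t', IsInducedPathW G p ∧
    ∀ v ∈ p.support, v ∈ closedNbhd G (S ∪ {s', t'}) → v = s' ∨ v = t'

/-- `f` realizes an induced copy of `H` in `G`. -/
def IsCopy {V α : Type*} (G : SimpleGraph V) (H : SimpleGraph α) (f : α → V) : Prop :=
  Function.Injective f ∧ ∀ x y : α, H.Adj x y ↔ G.Adj (f x) (f y)

/-- `(s', t')` is an extension of the copy `f` of the two-rooted graph `(H, s, t)` in `G`:
two pendant edges at the images of the roots. -/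
def IsExtension {V α : Type*} (G : SimpleGraph V) (H : SimpleGraph α) (f : α → V)
    (s t : α) (s' t' : V) : Prop :=
  s' ≠ t' ∧ (∀ x, f x ≠ s') ∧ (∀ x, f x ≠ t') ∧ ¬ G.Adj s' t' ∧
  G.Adj (f s) s' ∧ G.Adj (f t) t' ∧
  (∀ x, f x ≠ f s → ¬ G.Adj (f x) s') ∧ (∀ x, f x ≠ f t → ¬ G.Adj (f x) t')

/-- An avoidable copy of the two-rooted graph `(H, s, t)` in `G`. -/
def AvoidableCopy {V α : Type*} (G : SimpleGraph V) (H : SimpleGraph α) (f : α → V)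
    (s t : α) : Prop :=
  IsCopy G H f ∧ ∀ s' t' : V, IsExtension G H f s t s' t' →
    Closable G (Set.range f) s' t'

/-- The two-rooted graph `(H, s, t)` is inherent. -/
def Inherent {α : Type} [Fintype α] (H : SimpleGraph α) (s t : α) : Prop :=
  ∀ (V : Type) (_ : Fintype V) (G : SimpleGraph V),
    (∃ f : α → V, IsCopy G H f) → ∃ f : α → V, AvoidableCopy G H f s t

/-- `G` confines the two-rooted graph `(H, s, t)`. -/
def Confines {V α : Type*} (G : SimpleGraph V) (H : SimpleGraph α) (s t : α) : Prop :=
  (∃ f : α → V, IsCopy G H f) ∧ ∀ f : α → V, ¬ AvoidableCopy G H f s t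

/-- `G` contains an induced path on three vertices. -/
def HasInducedP3 {V : Type*} (G : SimpleGraph V) : Prop :=
  ∃ x y z : V, G.Adj x y ∧ G.Adj y z ∧ x ≠ z ∧ ¬ G.Adj x z

/-- A `P_k`-avoiding set: `G[U]` is connected and `G − N[U]` contains an induced
`k`-vertex path. -/
def PathAvoiding {V : Type} (G : SimpleGraph V) (k : ℕ) (U : Set V) : Prop :=
  (G.induce U).Connected ∧
    ∃ f : Fin k → V, IsCopy G (SimpleGraph.pathGraph k) f ∧
      ∀ i, f i ∈ (closedNbhd G U)ᶜ

lemma connected_insert_aux {V : Type*} (G : SimpleGraph V) (U : Set V)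
    (hU : (G.induce U).Connected) (x u : V) (hu : u ∈ U) (hadj : G.Adj u x) :
    (G.induce (insert x U)).Connected := by
  have hsub : U ⊆ insert x U := Set.subset_insert x U
  let ι : G.induce U →g G.induce (insert x U) :=
    ⟨fun v => ⟨v.1, hsub v.2⟩, fun {a b} h => h⟩
  have : Nonempty ↥(insert x U : Set V) := ⟨⟨x, Set.mem_insert x U⟩⟩
  refine ⟨?_⟩
  have hreach : ∀ a : ↥(insert x U : Set V), (G.induce (insert x U)).Reachable a ⟨u, hsub hu⟩ := by
    rintro ⟨a, ha⟩
    rcases Set.mem_insert_iff.mp ha with rfl | ha'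
    · exact (show (G.induce (insert a U)).Adj ⟨a, ha⟩ ⟨u, hsub hu⟩ from hadj.symm).reachable
    · exact (hU.preconnected ⟨a, ha'⟩ ⟨u, hu⟩).map ι
  intro a b
  exact (hreach a).trans (hreach b).symm

lemma key_aux {V : Type} [Fintype V] (G : SimpleGraph V) (k : ℕ) (hk : 1 ≤ k)
    (U : Set V)
    (hU : PathAvoiding G k U)
    (hmax : ∀ U' : Set V, U ⊆ U' → PathAvoiding G k U' → U' = U)
    (f : Fin k → V) (hf : IsCopy G (SimpleGraph.pathGraph k) f)
    (hfout : ∀ i, f i ∈ (closedNbhd G U)ᶜ)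
    (x' y' : V)
    (hext : IsExtension G (SimpleGraph.pathGraph k) f ⟨0, Nat.lt_of_lt_of_le Nat.zero_lt_one hk⟩
      ⟨k - 1, Nat.sub_lt (Nat.lt_of_lt_of_le Nat.zero_lt_one hk) Nat.one_pos⟩ x' y') :
    ¬ (x' ∈ openNbhd G U ∧ y' ∉ closedNbhd G U) := by
  rintro ⟨hx', hy'⟩
  obtain ⟨hxU, u, hu, huadj⟩ := hx'
  obtain ⟨hne, hns, hnt, hnadj, hadjs, hadjt, honlys, honlyt⟩ := hext
  -- facts about adjacency to x' and y'
  have hy'adj : ∀ m : Fin k, G.Adj (f m) y' ↔ (m : ℕ) = k - 1 := by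
    intro m
    constructor
    · intro h
      by_contra hm
      exact honlyt m (fun he => hm (by have := congrArg Fin.val (hf.1 he); simpa using this)) h
    · intro h
      have hm : m = ⟨k - 1, by omega⟩ := Fin.ext h
      rw [hm]; exact hadjt
  have hx'adj : ∀ m : Fin k, G.Adj (f m) x' ↔ (m : ℕ) = 0 := by
    intro m
    constructor
    · intro h
      by_contra hm
      exact honlys m (fun he => hm (by have := congrArg Fin.val (hf.1 he); simpa using this)) h
    · intro h
      have hm : m = ⟨0, by omega⟩ := Fin.ext h
      rw [hm]; exact hadjs
  have hout : ∀ i, f i ∉ U ∧ ∀ w ∈ U, ¬ G.Adj w (f i) := by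
    intro i
    have := hfout i
    simp only [closedNbhd, Set.mem_compl_iff, Set.mem_union, Set.mem_setOf_eq, not_or,
      not_exists, not_and] at this
    exact ⟨this.1, fun w hw => this.2 w hw⟩
  have hy'out : y' ∉ U ∧ ∀ w ∈ U, ¬ G.Adj w y' := by
    simp only [closedNbhd, Set.mem_compl_iff, Set.mem_union, Set.mem_setOf_eq, not_or,
      not_exists, not_and] at hy'
    exact ⟨hy'.1, fun w hw => hy'.2 w hw⟩
  -- the shifted path
  set g : Fin k → V := fun i => if h : (i : ℕ) + 1 < k then f ⟨(i : ℕ) + 1, h⟩ else y' with hg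
  have hgval : ∀ i : Fin k, (¬ ((i : ℕ) + 1 < k) → g i = y') ∧
      ∀ h : (i : ℕ) + 1 < k, g i = f ⟨(i : ℕ) + 1, h⟩ := by
    intro i
    constructor
    · intro h; simp [hg, h]
    · intro h; simp [hg, h]
  have hginj : Function.Injective g := by
    intro i j hij
    by_cases hi : (i : ℕ) + 1 < k <;> by_cases hj : (j : ℕ) + 1 < k
    · rw [(hgval i).2 hi, (hgval j).2 hj] at hij
      have := congrArg Fin.val (hf.1 hij)
      simp at this
      exact Fin.ext (by omega)
    · rw [(hgval i).2 hi, (hgval j).1 hj] at hij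
      exact absurd hij (hnt _)
    · rw [(hgval i).1 hi, (hgval j).2 hj] at hij
      exact absurd hij.symm (hnt _)
    · have := i.2; have := j.2
      exact Fin.ext (by omega)
  have hgadj : ∀ i j : Fin k, (SimpleGraph.pathGraph k).Adj i j ↔ G.Adj (g i) (g j) := by
    intro i j
    rw [SimpleGraph.pathGraph_adj]
    by_cases hi : (i : ℕ) + 1 < k <;> by_cases hj : (j : ℕ) + 1 < k
    · rw [(hgval i).2 hi, (hgval j).2 hj, ← hf.2, SimpleGraph.pathGraph_adj]
      simp only [Fin.val_mk]
      omega
    · rw [(hgval i).2 hi, (hgval j).1 hj]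
      have := j.2
      rw [hy'adj ⟨(i : ℕ) + 1, hi⟩]
      simp only [Fin.val_mk]
      omega
    · rw [(hgval i).1 hi, (hgval j).2 hj]
      have := i.2
      rw [adj_comm, hy'adj ⟨(j : ℕ) + 1, hj⟩]
      simp only [Fin.val_mk]
      omega
    · rw [(hgval i).1 hi, (hgval j).1 hj]
      have := i.2; have := j.2
      simp only [SimpleGraph.irrefl, iff_false]
      omega
  -- each g i avoids the closed neighborhood of insert x' U
  have hgout : ∀ i, g i ∈ (closedNbhd G (insert x' U))ᶜ := by
    intro i
    simp only [closedNbhd, Set.mem_compl_iff, Set.mem_union, Set.mem_setOf_eq, not_or,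
      not_exists, not_and, Set.mem_insert_iff]
    by_cases hi : (i : ℕ) + 1 < k
    · rw [(hgval i).2 hi]
      refine ⟨?_, ?_⟩
      · push_neg
        exact ⟨hns _, (hout _).1⟩
      · rintro w (rfl | hw)
        · intro h
          have := (hx'adj ⟨(i : ℕ) + 1, hi⟩).mp h.symm
          simp at this
        · exact (hout _).2 w hw
    · rw [(hgval i).1 hi]
      refine ⟨?_, ?_⟩
      · push_neg
        exact ⟨fun h => hne h.symm, hy'out.1⟩
      · rintro w (rfl | hw)
        · exact hnadj
        · exact hy'out.2 w hw
  -- insert x' U is PathAvoiding, contradicting maximality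
  have hPA : PathAvoiding G k (insert x' U) :=
    ⟨connected_insert_aux G U hU.1 x' u hu huadj, g, ⟨hginj, hgadj⟩, hgout⟩
  have := hmax (insert x' U) (Set.subset_insert x' U) hPA
  exact hxU (this ▸ Set.mem_insert x' U)

/-- if `U` is an inclusion-maximal `P_k`-avoiding set, `(P̃, x, y)` is an
induced `k`-vertex path in `G − N[U]` and `(P̃', x', y')` is an extension of it in `G`,
then it is impossible that exactly one of `x'`, `y'` lies in `N(U)`. -/
theorem stmt_17 {V : Type} [Fintype V] (G : SimpleGraph V) (k : ℕ) (hk : 1 ≤ k)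
    (U : Set V) (hU : PathAvoiding G k U)
    (hmax : ∀ U' : Set V, U ⊆ U' → PathAvoiding G k U' → U' = U)
    (f : Fin k → V) (hf : IsCopy G (SimpleGraph.pathGraph k) f)
    (hfout : ∀ i, f i ∈ (closedNbhd G U)ᶜ)
    (x' y' : V)
    (hext : IsExtension G (SimpleGraph.pathGraph k) f ⟨0, by omega⟩ ⟨k - 1, by omega⟩ x' y') :
    ¬ (x' ∈ openNbhd G U ∧ y' ∉ closedNbhd G U) ∧
    ¬ (y' ∈ openNbhd G U ∧ x' ∉ closedNbhd G U) := by
  constructor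
  · exact key_aux G k hk U hU hmax f hf hfout x' y' hext
  · -- reverse the path
    set frev : Fin k → V := fun i => f i.rev with hfrev
    have hrev0 : (⟨0, by omega⟩ : Fin k).rev = ⟨k - 1, by omega⟩ := by
      apply Fin.ext
      simp only [Fin.val_rev, Fin.val_mk]
      try omega
    have hrevlast : (⟨k - 1, by omega⟩ : Fin k).rev = ⟨0, by omega⟩ := by
      apply Fin.ext
      simp only [Fin.val_rev, Fin.val_mk]
      try omega
    obtain ⟨hne, hns, hnt, hnadj, hadjs, hadjt, honlys, honlyt⟩ := hext
    have hfrevcopy : IsCopy G (SimpleGraph.pathGraph k) frev := by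
      refine ⟨fun i j h => Fin.rev_injective (hf.1 h), fun i j => ?_⟩
      rw [show G.Adj (frev i) (frev j) ↔ (SimpleGraph.pathGraph k).Adj i.rev j.rev from
        (hf.2 i.rev j.rev).symm]
      rw [SimpleGraph.pathGraph_adj, SimpleGraph.pathGraph_adj]
      have := i.2; have := j.2
      simp only [Fin.val_rev]
      omega
    have hfrevout : ∀ i, frev i ∈ (closedNbhd G U)ᶜ := fun i => hfout i.rev
    have hext' : IsExtension G (SimpleGraph.pathGraph k) frev ⟨0, by omega⟩ ⟨k - 1, by omega⟩
        y' x' := by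
      refine ⟨fun h => hne h.symm, fun i => hnt i.rev, fun i => hns i.rev,
        fun h => hnadj h.symm, ?_, ?_, ?_, ?_⟩
      · show G.Adj (f (⟨0, by omega⟩ : Fin k).rev) y'
        rw [hrev0]; exact hadjt
      · show G.Adj (f (⟨k - 1, by omega⟩ : Fin k).rev) x'
        rw [hrevlast]; exact hadjs
      · intro i hi
        apply honlyt i.rev
        intro h
        apply hi
        show f i.rev = f (⟨0, by omega⟩ : Fin k).rev
        rw [hrev0]; exact h
      · intro i hi
        apply honlys i.rev
        intro h
        apply hi
        show f i.rev = f (⟨k - 1, by omega⟩ : Fin k).rev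
        rw [hrevlast]; exact h
    exact key_aux G k hk U hU hmax frev hfrevcopy hfrevout y' x' hext'
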